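/- Let 0 ≤ l < k ≤ n, λ ∈ Γ_k, and F(λ) = [σ_k(λ)/σ_l(λ)]^{1/(k-l)} with F^{ii} = ∂F/∂λ_i. Then Σ_{i=1}^n F^{ii}(λ) ≥ (C(n,k)/C(n,l))^{1/(k-l)}, where C(n,j) is the binomial coefficient. -/

import Mathlib

open Finset

/-- The k-th elementary symmetric function of x = (x_1,...,x_n). -/
noncomputable def esymm (n k : ℕ) (x : Fin n → ℝ) : ℝ :=
  ∑ s ∈ (Finset.univ : Finset (Fin n)).powersetCard k, ∏ i ∈ s, x i

/-- σ_k(x | i): the k-th elementary symmetric function of x with the i-th entry deleted. -/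
noncomputable def esymmDel (n k : ℕ) (x : Fin n → ℝ) (i : Fin n) : ℝ :=
  ∑ s ∈ ((Finset.univ : Finset (Fin n)).erase i).powersetCard k, ∏ j ∈ s, x j

/-- The Garding cone Γ_k = {x : σ_j(x) > 0 for all 1 ≤ j ≤ k}. -/
def gardingCone (n k : ℕ) : Set (Fin n → ℝ) :=
  {x | ∀ j : ℕ, 1 ≤ j → j ≤ k → 0 < esymm n j x}

/-- σ_k for integer index, with the convention σ_k = 0 for k < 0. -/
noncomputable def esymmZ (n : ℕ) (k : ℤ) (x : Fin n → ℝ) : ℝ :=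
  if k < 0 then 0 else esymm n k.toNat x

/-- σ_k(x|i) for integer index, with the convention σ_k = 0 for k < 0. -/
noncomputable def esymmDelZ (n : ℕ) (k : ℤ) (x : Fin n → ℝ) (i : Fin n) : ℝ :=
  if k < 0 then 0 else esymmDel n k.toNat x i

section AuxNewton

open Polynomial Nat

lemma rr_derivative {p : ℝ[X]} {d : ℕ} (hd : p.natDegree = d + 1)
    (hr : Multiset.card p.roots = d + 1) :
    (derivative p).natDegree = d ∧ Multiset.card (derivative p).roots = d := by
  have h1 : (derivative p).natDegree ≤ d := by
    have := natDegree_derivative_le p; omega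
  have h2 := card_roots_le_derivative p
  have h3 := card_roots' (derivative p)
  omega

lemma rr_iterate {d : ℕ} (m : ℕ) : ∀ {p : ℝ[X]}, p.natDegree = d + m →
    Multiset.card p.roots = d + m →
    (derivative^[m] p).natDegree = d ∧ Multiset.card (derivative^[m] p).roots = d := by
  induction m with
  | zero => intro p hd hr; simpa using ⟨hd, hr⟩
  | succ m ih =>
    intro p hd hr
    obtain ⟨h1, h2⟩ := rr_derivative (p := p) (d := d + m) (by omega) (by omega)
    rw [Function.iterate_succ_apply]
    exact ih h1 h2

lemma reflect_prod (s : Multiset ℝ) :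
    reflect (Multiset.card s) ((s.map fun a => X - C a).prod)
      = (s.map fun a => 1 - C a * X).prod := by
  induction s using Multiset.induction with
  | empty => simp
  | cons r t ih =>
    simp only [Multiset.map_cons, Multiset.prod_cons, Multiset.card_cons]
    rw [show Multiset.card t + 1 = 1 + Multiset.card t from by omega,
      reflect_mul _ _ (natDegree_X_sub_C r).le
        (by rw [natDegree_multiset_prod_X_sub_C_eq_card]), ih]
    congr 1
    have : (X - C r : ℝ[X]) = X + C (-r) := by rw [map_neg, sub_eq_add_neg]
    rw [this, reflect_add, reflect_C]
    have hx : reflect 1 (X : ℝ[X]) = 1 := by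
      have := reflect_monomial 1 1 (R := ℝ)
      simpa [pow_one, revAt_le] using this
    rw [hx, map_neg]
    ring

lemma rr_reflect {p : ℝ[X]} {N : ℕ} (hd : p.natDegree = N)
    (hr : Multiset.card p.roots = N) (h0 : p.coeff 0 ≠ 0) :
    (reflect N p).natDegree = N ∧ Multiset.card (reflect N p).roots = N := by
  have hpne : p ≠ 0 := fun h => h0 (by simp [h])
  have h0r : (0 : ℝ) ∉ p.roots := by
    intro h
    rw [mem_roots hpne] at h
    exact h0 (by simpa [coeff_zero_eq_eval_zero] using h)
  have hfact := C_leadingCoeff_mul_prod_multiset_X_sub_C (p := p) (by rw [hr, hd])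
  have ha : p.leadingCoeff ≠ 0 := leadingCoeff_ne_zero.mpr hpne
  have key : reflect N p
      = C (p.leadingCoeff * (p.roots.map fun r => -r).prod) *
        ((p.roots.map fun r => r⁻¹).map fun a => X - C a).prod := by
    conv_lhs => rw [← hfact]
    rw [reflect_C_mul, ← hr, reflect_prod]
    have hcongr : (p.roots.map fun r => 1 - C r * X)
        = p.roots.map fun r => C (-r) * (X - C r⁻¹) := by
      apply Multiset.map_congr rfl
      intro r hrr
      have hrne : r ≠ 0 := fun h => h0r (h ▸ hrr)
      have h1 : C r * C r⁻¹ = (1 : ℝ[X]) := by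
        rw [← C_mul, mul_inv_cancel₀ hrne, map_one]
      rw [map_neg]
      linear_combination -h1
    rw [hcongr, Multiset.prod_map_mul, map_mul, Multiset.map_map]
    have : (p.roots.map fun r => C (-r)).prod = C ((p.roots.map fun r => -r).prod) := by
      rw [show (fun r : ℝ => C (-r)) = C ∘ (fun r => -r) from rfl, ← Multiset.map_map,
        Multiset.prod_hom]
    rw [this]
    simp only [Function.comp_def]
    ring
  have hbne : p.leadingCoeff * (p.roots.map fun r => -r).prod ≠ 0 := by
    refine mul_ne_zero ha (Multiset.prod_ne_zero ?_)
    intro h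
    obtain ⟨r, hrr, hr0⟩ := Multiset.mem_map.mp h
    apply h0r
    have hr00 : r = 0 := by linarith [hr0]
    exact hr00 ▸ hrr
  constructor
  · rw [key, natDegree_C_mul hbne, natDegree_multiset_prod_X_sub_C_eq_card,
      Multiset.card_map, hr]
  · rw [key, roots_C_mul _ hbne, roots_multiset_prod_X_sub_C, Multiset.card_map, hr]

set_option maxHeartbeats 2000000 in
lemma newton_real (n j : ℕ) (x : Fin n → ℝ) (hj1 : 1 ≤ j) (hjn : j + 1 ≤ n) :
    esymm n (j-1) x * esymm n (j+1) x *
      (((j+1)! : ℝ) * ((j-1)! : ℝ) * ((n-j+1)! : ℝ) * ((n-j-1)! : ℝ)) ≤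
    esymm n j x ^ 2 * (((j ! : ℝ) * ((n-j)! : ℝ))^2) := by
  by_cases hz : esymm n (j+1) x = 0
  · rw [hz]
    have h1 : (0:ℝ) ≤ esymm n j x ^ 2 * (((j ! : ℝ) * ((n-j)! : ℝ))^2) := by positivity
    nlinarith
  -- the polynomial with roots -x i
  set R : Multiset ℝ := Multiset.map (fun i => -x i) Finset.univ.val with hR
  have hRcard : Multiset.card R = n := by simp [hR]
  set P0 : ℝ[X] := (R.map fun a => X - C a).prod with hP0
  have hP0d : P0.natDegree = n := by
    rw [hP0, natDegree_multiset_prod_X_sub_C_eq_card, hRcard]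
  have hP0r : P0.roots = R := roots_multiset_prod_X_sub_C R
  have hP0coeff : ∀ m, m ≤ n → P0.coeff (n - m) = esymm n m x := by
    intro m hm
    have hprod : P0 = ∏ i : Fin n, (X + C (x i)) := by
      rw [hP0, hR, Finset.prod, Multiset.map_map]
      congr 1
      apply Multiset.map_congr rfl
      intro i _
      simp [sub_neg_eq_add, map_neg]
    rw [hprod, Finset.prod_X_add_C_coeff _ x (by simpa using Nat.sub_le n m : n - m ≤ Finset.univ.card)]
    · rw [esymm]
      congr 1
      · congr 1
        simp only [Finset.card_univ, Fintype.card_fin]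
        omega
  set P1 : ℝ[X] := derivative^[n - j - 1] P0 with hP1
  obtain ⟨hP1d, hP1r⟩ := rr_iterate (p := P0) (d := j + 1) (n - j - 1) (by rw [hP0d]; omega) (by rw [hP0r, hRcard]; omega)
  rw [← hP1] at hP1d hP1r
  have hP1coeff : ∀ m, m ≤ j + 1 →
      P1.coeff m = ((m + (n-j-1)).descFactorial (n-j-1) : ℝ) * esymm n (j+1-m) x := by
    intro m hm
    rw [hP1, coeff_iterate_derivative, nsmul_eq_mul]
    congr 1
    have : m + (n - j - 1) = n - (j + 1 - m) := by omega
    rw [this, hP0coeff _ (by omega)]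
  have hdFne : ∀ a b : ℕ, b ≤ a → ((a.descFactorial b : ℝ)) ≠ 0 := by
    intro a b hba
    have : a.descFactorial b ≠ 0 := fun h =>
      absurd (Nat.descFactorial_eq_zero_iff_lt.mp h) (by omega)
    exact Nat.cast_ne_zero.mpr this
  have hP1c0 : P1.coeff 0 ≠ 0 := by
    rw [hP1coeff 0 (by omega)]
    exact mul_ne_zero (hdFne _ _ (by omega)) (by simpa using hz)
  set P2 : ℝ[X] := reflect (j + 1) P1 with hP2
  obtain ⟨hP2d, hP2r⟩ := rr_reflect (p := P1) (N := j + 1) hP1d hP1r hP1c0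
  rw [← hP2] at hP2d hP2r
  have hP2coeff : ∀ m, m ≤ j + 1 → P2.coeff m = P1.coeff (j + 1 - m) := by
    intro m hm
    rw [hP2, coeff_reflect, revAt_le hm]
  set P3 : ℝ[X] := derivative^[j - 1] P2 with hP3
  obtain ⟨hP3d, hP3r⟩ := rr_iterate (p := P2) (d := 2) (j - 1)
    (by rw [hP2d]; omega) (by rw [hP2r]; omega)
  rw [← hP3] at hP3d hP3r
  have hP3coeff : ∀ m, m ≤ 2 →
      P3.coeff m = ((m + (j-1)).descFactorial (j-1) : ℝ) * P2.coeff (m + (j - 1)) := by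
    intro m hm
    rw [hP3, coeff_iterate_derivative, nsmul_eq_mul]
  -- the three coefficients
  set A : ℝ := P3.coeff 2 with hA
  set B : ℝ := P3.coeff 1 with hB
  set Cc : ℝ := P3.coeff 0 with hCc
  have hAval : A = ((j+1).descFactorial (j-1) : ℝ) *
      (((n-j-1).descFactorial (n-j-1) : ℝ) * esymm n (j+1) x) := by
    rw [hA, hP3coeff 2 le_rfl, hP2coeff _ (by omega)]
    have e1 : 2 + (j - 1) = j + 1 := by omega
    have e2 : j + 1 - (2 + (j - 1)) = 0 := by omega
    rw [e1, show j + 1 - (j + 1) = 0 from by omega, hP1coeff 0 (by omega)]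
    norm_num
  have hBval : B = (j.descFactorial (j-1) : ℝ) *
      (((n-j).descFactorial (n-j-1) : ℝ) * esymm n j x) := by
    rw [hB, hP3coeff 1 (by omega), hP2coeff _ (by omega)]
    rw [show 1 + (j - 1) = j from by omega, show j + 1 - j = 1 from by omega,
      hP1coeff 1 (by omega)]
    rw [show 1 + (n - j - 1) = n - j from by omega, show j + 1 - 1 = j from by omega]
  have hCval : Cc = (((j-1).descFactorial (j-1) : ℝ)) *
      (((n-j+1).descFactorial (n-j-1) : ℝ) * esymm n (j-1) x) := by
    rw [hCc, hP3coeff 0 (by omega), hP2coeff _ (by omega)]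
    rw [show 0 + (j - 1) = j - 1 from by omega, show j + 1 - (j - 1) = 2 from by omega,
      hP1coeff 2 (by omega)]
    rw [show 2 + (n - j - 1) = n - j + 1 from by omega, show j + 1 - 2 = j - 1 from by omega]
  -- existence of a real root
  have hP3ne : P3 ≠ 0 := by
    intro h
    rw [h] at hP3d
    simp at hP3d
  obtain ⟨r, hrmem⟩ := Multiset.exists_mem_of_ne_zero
    (by rw [← Multiset.card_pos] at *; omega : P3.roots ≠ 0)
  have hroot : P3.eval r = 0 := (mem_roots hP3ne).mp hrmem
  have heval : Cc + B * r + A * r ^ 2 = 0 := by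
    have h := eval_eq_sum_range (p := P3) r
    rw [hP3d, hroot] at h
    rw [Finset.sum_range_succ, Finset.sum_range_succ, Finset.sum_range_one] at h
    rw [← hA, ← hB, ← hCc, pow_zero, pow_one, mul_one] at h
    linarith [h]
  have hdisc : 4 * (A * Cc) ≤ B ^ 2 := by
    have hCc2 : Cc = -(B * r) - A * r ^ 2 := by linarith
    rw [hCc2]
    nlinarith [sq_nonneg (2 * A * r + B)]
  -- convert descFactorials to factorials
  have c1 : (j.descFactorial (j-1) : ℝ) = (j ! : ℝ) := by
    have h := Nat.factorial_mul_descFactorial (show j - 1 ≤ j from by omega)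
    rw [show j - (j - 1) = 1 from by omega] at h
    have h2 : j.descFactorial (j-1) = j ! := by simpa using h
    exact_mod_cast h2
  have c2 : ((n-j).descFactorial (n-j-1) : ℝ) = ((n-j)! : ℝ) := by
    have h := Nat.factorial_mul_descFactorial (show n - j - 1 ≤ n - j from by omega)
    rw [show n - j - (n - j - 1) = 1 from by omega] at h
    have h2 : (n-j).descFactorial (n-j-1) = (n-j)! := by simpa using h
    exact_mod_cast h2
  have c3 : 2 * ((j+1).descFactorial (j-1) : ℝ) = ((j+1)! : ℝ) := by
    have h := Nat.factorial_mul_descFactorial (show j - 1 ≤ j + 1 from by omega)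
    rw [show j + 1 - (j - 1) = 2 from by omega] at h
    have h2 : (2 * ((j+1).descFactorial (j-1)) : ℕ) = (j+1)! := by
      simpa using h
    exact_mod_cast h2
  have c4 : ((j-1).descFactorial (j-1) : ℝ) = ((j-1)! : ℝ) := by
    exact_mod_cast Nat.descFactorial_self (j-1)
  have c5 : ((n-j-1).descFactorial (n-j-1) : ℝ) = ((n-j-1)! : ℝ) := by
    exact_mod_cast Nat.descFactorial_self (n-j-1)
  have c6 : 2 * ((n-j+1).descFactorial (n-j-1) : ℝ) = ((n-j+1)! : ℝ) := by
    have h := Nat.factorial_mul_descFactorial (show n - j - 1 ≤ n - j + 1 from by omega)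
    rw [show n - j + 1 - (n - j - 1) = 2 from by omega] at h
    have h2 : (2 * ((n-j+1).descFactorial (n-j-1)) : ℕ) = (n-j+1)! := by
      simpa using h
    exact_mod_cast h2
  rw [hAval, hBval, hCval] at hdisc
  rw [← c3, ← c6, ← c4, ← c5, ← c1, ← c2]
  nlinarith [hdisc]

section chain

lemma cross_ratio (s : ℕ → ℝ) (a K : ℕ) (hpos : ∀ j, a ≤ j → j ≤ K → 0 < s j)
    (hN : ∀ j, a + 1 ≤ j → j + 1 ≤ K → s (j-1) * s (j+1) ≤ s j ^ 2) :
    ∀ i j, a ≤ i → i ≤ j → j + 1 ≤ K → s i * s (j+1) ≤ s (i+1) * s j := by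
  intro i j hai hij
  induction j, hij using Nat.le_induction with
  | base => intro h; exact le_of_eq (mul_comm _ _)
  | succ j hij IH =>
    intro hjK
    have hNj := hN (j+1) (by omega) (by omega)
    rw [Nat.add_sub_cancel] at hNj
    have h1 : 0 < s (j+1) := hpos _ (by omega) (by omega)
    have h2 : 0 < s (j+2) := hpos _ (by omega) (by omega)
    have h3 : 0 < s i := hpos _ (by omega) (by omega)
    have h4 : 0 < s (i+1) := hpos _ (by omega) (by omega)
    have h5 : 0 < s j := hpos _ (by omega) (by omega)
    have IH' := IH (by omega)
    have key : s i * s (j+2) * s (j+1) ≤ s (i+1) * s (j+1) * s (j+1) := by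
      calc s i * s (j+2) * s (j+1) = (s i * s (j+1)) * s (j+2) := by ring
        _ ≤ (s (i+1) * s j) * s (j+2) := by
            exact mul_le_mul_of_nonneg_right IH' h2.le
        _ = s (i+1) * (s j * s (j+2)) := by ring
        _ ≤ s (i+1) * s (j+1) ^ 2 := by
            exact mul_le_mul_of_nonneg_left hNj h4.le
        _ = s (i+1) * s (j+1) * s (j+1) := by ring
    exact le_of_mul_le_mul_right key h1

lemma chain_up (s : ℕ → ℝ) (a K : ℕ) (hpos : ∀ j, a ≤ j → j ≤ K → 0 < s j)
    (hN : ∀ j, a + 1 ≤ j → j + 1 ≤ K → s (j-1) * s (j+1) ≤ s j ^ 2)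
    (m : ℕ) (ham : a ≤ m) (hmK : m + 1 ≤ K) :
    ∀ t, m ≤ t → t ≤ K → s t * s m ^ (t - m) ≤ s m * s (m+1) ^ (t - m) := by
  intro t hmt
  induction t, hmt using Nat.le_induction with
  | base => intro _; simp
  | succ t hmt IH =>
    intro htK
    have IH' := IH (by omega)
    have hsm : 0 < s m := hpos _ (by omega) (by omega)
    have hsm1 : 0 < s (m+1) := hpos _ (by omega) (by omega)
    have hst : 0 < s t := hpos _ (by omega) (by omega)
    have hst1 : 0 < s (t+1) := hpos _ (by omega) (by omega)
    have hc := cross_ratio s a K hpos hN m t (by omega) (by omega) (by omega)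
    have e : t + 1 - m = (t - m) + 1 := by omega
    rw [e, pow_succ, pow_succ]
    calc s (t+1) * (s m ^ (t-m) * s m) = (s m * s (t+1)) * s m ^ (t-m) := by ring
      _ ≤ (s (m+1) * s t) * s m ^ (t-m) := by
          exact mul_le_mul_of_nonneg_right hc (by positivity)
      _ = s (m+1) * (s t * s m ^ (t-m)) := by ring
      _ ≤ s (m+1) * (s m * s (m+1) ^ (t-m)) := by
          exact mul_le_mul_of_nonneg_left IH' hsm1.le
      _ = s m * (s (m+1) ^ (t-m) * s (m+1)) := by ring

lemma chain_down (s : ℕ → ℝ) (a K : ℕ) (hpos : ∀ j, a ≤ j → j ≤ K → 0 < s j)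
    (hN : ∀ j, a + 1 ≤ j → j + 1 ≤ K → s (j-1) * s (j+1) ≤ s j ^ 2)
    (m : ℕ) (ham : a ≤ m) (hmK : m + 1 ≤ K) :
    ∀ δ, δ ≤ m - a → s (m - δ) * s (m+1) ^ δ ≤ s m ^ (δ + 1) := by
  intro δ
  induction δ with
  | zero => intro _; simp
  | succ δ IH =>
    intro hδ
    have IH' := IH (by omega)
    have hsm : 0 < s m := hpos _ (by omega) (by omega)
    have hsm1 : 0 < s (m+1) := hpos _ (by omega) (by omega)
    have ht : 0 < s (m - δ - 1) := hpos _ (by omega) (by omega)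
    have hc := cross_ratio s a K hpos hN (m - δ - 1) m (by omega) (by omega) (by omega)
    have e1 : m - δ - 1 + 1 = m - δ := by omega
    rw [e1] at hc
    have e2 : m - (δ + 1) = m - δ - 1 := by omega
    rw [e2, pow_succ]
    calc s (m - δ - 1) * (s (m+1) ^ δ * s (m+1))
        = (s (m - δ - 1) * s (m+1)) * s (m+1) ^ δ := by ring
      _ ≤ (s (m - δ) * s m) * s (m+1) ^ δ := by
          exact mul_le_mul_of_nonneg_right hc (by positivity)
      _ = s m * (s (m - δ) * s (m+1) ^ δ) := by ring
      _ ≤ s m * s m ^ (δ + 1) := by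
          exact mul_le_mul_of_nonneg_left IH' hsm.le
      _ = s m ^ (δ + 1 + 1) := by ring

lemma log_concave_interval (s : ℕ → ℝ) (a K : ℕ) (hpos : ∀ j, a ≤ j → j ≤ K → 0 < s j)
    (hN : ∀ j, a + 1 ≤ j → j + 1 ≤ K → s (j-1) * s (j+1) ≤ s j ^ 2)
    (m : ℕ) (ham : a ≤ m) (hmK : m ≤ K) :
    s K ^ (m - a) * s a ^ (K - m) ≤ s m ^ (K - a) := by
  rcases eq_or_lt_of_le hmK with h | h
  · subst h
    simp [Nat.sub_self]
  set α := m - a with hα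
  set β := K - m with hβ
  have hKa : K - a = α + β := by omega
  have hsm : 0 < s m := hpos _ (by omega) (by omega)
  have hsm1 : 0 < s (m+1) := hpos _ (by omega) (by omega)
  have hsK : 0 < s K := hpos _ (by omega) (by omega)
  have hsa : 0 < s a := hpos _ (by omega) (by omega)
  have h1 : s K * s m ^ β ≤ s m * s (m+1) ^ β :=
    chain_up s a K hpos hN m ham (by omega) K (by omega) (by omega)
  have h2 : s a * s (m+1) ^ α ≤ s m ^ (α + 1) := by
    have := chain_down s a K hpos hN m ham (by omega) α (by omega)
    rwa [show m - α = a from by omega] at this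
  have h1p : s K ^ α * s m ^ (β * α) ≤ s m ^ α * s (m+1) ^ (β * α) := by
    have := pow_le_pow_left₀ (by positivity) h1 α
    rw [mul_pow, mul_pow, ← pow_mul, ← pow_mul] at this
    exact this
  have h2p : s a ^ β * s (m+1) ^ (α * β) ≤ s m ^ ((α + 1) * β) := by
    have := pow_le_pow_left₀ (by positivity) h2 β
    rw [mul_pow, ← pow_mul, ← pow_mul] at this
    exact this
  have key : (s K ^ α * s a ^ β) * (s m ^ (β * α) * s (m+1) ^ (α * β))
      ≤ s m ^ (α + β) * (s m ^ (β * α) * s (m+1) ^ (α * β)) := by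
    calc (s K ^ α * s a ^ β) * (s m ^ (β * α) * s (m+1) ^ (α * β))
        = (s K ^ α * s m ^ (β * α)) * (s a ^ β * s (m+1) ^ (α * β)) := by ring
      _ ≤ (s m ^ α * s (m+1) ^ (β * α)) * (s m ^ ((α + 1) * β)) := by
          exact mul_le_mul h1p h2p (by positivity) (by positivity)
      _ = s m ^ (α + β) * (s m ^ (β * α) * s (m+1) ^ (α * β)) := by ring
  rw [hKa]
  exact le_of_mul_le_mul_right key (by positivity)

end chain

lemma esymm_zero (n : ℕ) (x : Fin n → ℝ) : esymm n 0 x = 1 := by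
  simp [esymm]

lemma sum_esymmDel (n m : ℕ) (x : Fin n → ℝ) :
    ∑ i : Fin n, esymmDel n m x i = ((n - m : ℕ) : ℝ) * esymm n m x := by
  unfold esymmDel esymm
  have hset : ∀ i : Fin n, ((Finset.univ : Finset (Fin n)).erase i).powersetCard m
      = ((Finset.univ : Finset (Fin n)).powersetCard m).filter (fun s => i ∉ s) := by
    intro i
    ext s
    simp only [Finset.mem_powersetCard, Finset.mem_filter, Finset.subset_erase]
    tauto
  calc ∑ i : Fin n, ∑ s ∈ ((Finset.univ : Finset (Fin n)).erase i).powersetCard m, ∏ j ∈ s, x j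
      = ∑ i : Fin n, ∑ s ∈ (Finset.univ : Finset (Fin n)).powersetCard m,
          if i ∉ s then ∏ j ∈ s, x j else 0 := by
        refine Finset.sum_congr rfl fun i _ => ?_
        rw [hset i, Finset.sum_filter]
    _ = ∑ s ∈ (Finset.univ : Finset (Fin n)).powersetCard m,
          ∑ i : Fin n, if i ∉ s then ∏ j ∈ s, x j else 0 := Finset.sum_comm
    _ = ∑ s ∈ (Finset.univ : Finset (Fin n)).powersetCard m, ((n - m : ℕ) : ℝ) * ∏ j ∈ s, x j := by
        refine Finset.sum_congr rfl fun s hs => ?_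
        rw [← Finset.sum_filter]
        rw [Finset.sum_const]
        have hcard : (Finset.univ.filter (fun i => i ∉ s)).card = n - m := by
          have h1 : Finset.univ.filter (fun i => i ∉ s) = sᶜ := by
            ext i; simp
          rw [h1, Finset.card_compl]
          have := (Finset.mem_powersetCard.mp hs).2
          simp [this]
        rw [hcard, nsmul_eq_mul]
    _ = ((n - m : ℕ) : ℝ) * ∑ s ∈ (Finset.univ : Finset (Fin n)).powersetCard m, ∏ j ∈ s, x j :=
        (Finset.mul_sum _ _ _).symm

/-- For F(λ) = [σ_k(λ)/σ_l(λ)]^{1/(k-l)} with 0 ≤ l < k ≤ n and λ ∈ Γ_k,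
Σ_i F^{ii}(λ) ≥ (C(n,k)/C(n,l))^{1/(k-l)}, where
F^{ii} = (1/(k-l)) (σ_k/σ_l)^{1/(k-l)-1} (σ_{k-1}(λ|i)σ_l - σ_k σ_{l-1}(λ|i))/σ_l². -/
theorem sum_Fii_ge (n k l : ℕ) (hlk : l < k) (hkn : k ≤ n)
    (x : Fin n → ℝ) (hx : x ∈ gardingCone n k) :
    ((n.choose k : ℝ) / (n.choose l : ℝ)) ^ ((1 : ℝ) / ((k : ℝ) - (l : ℝ))) ≤
      ∑ i : Fin n,
        (1 / ((k : ℝ) - (l : ℝ))) *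
          (esymm n k x / esymm n l x) ^ ((1 : ℝ) / ((k : ℝ) - (l : ℝ)) - 1) *
          ((esymmDel n (k - 1) x i * esymm n l x -
              esymm n k x * esymmDelZ n ((l : ℤ) - 1) x i) / (esymm n l x) ^ 2) := by
  have hσpos : ∀ j, j ≤ k → 0 < esymm n j x := by
    intro j hj
    rcases Nat.eq_zero_or_pos j with h | h
    · rw [h, esymm_zero]; norm_num
    · exact hx j h hj
  -- the normalized sequence
  set s : ℕ → ℝ := fun j => esymm n j x * ((j ! : ℝ) * ((n - j)! : ℝ)) with hs
  have hspos : ∀ j, j ≤ k → 0 < s j := by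
    intro j hj
    have := hσpos j hj
    rw [hs]
    positivity
  have hN : ∀ j, 1 ≤ j → j + 1 ≤ k → s (j-1) * s (j+1) ≤ s j ^ 2 := by
    intro j h1 h2
    have hnew := newton_real n j x h1 (by omega)
    have e1 : n - (j-1) = n - j + 1 := by omega
    have e2 : n - (j+1) = n - j - 1 := by omega
    rw [hs]
    simp only [e1, e2]
    calc esymm n (j-1) x * (((j-1)! : ℝ) * ((n-j+1)! : ℝ)) *
          (esymm n (j+1) x * (((j+1)! : ℝ) * ((n-j-1)! : ℝ)))
        = esymm n (j-1) x * esymm n (j+1) x *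
          (((j+1)! : ℝ) * ((j-1)! : ℝ) * ((n-j+1)! : ℝ) * ((n-j-1)! : ℝ)) := by ring
      _ ≤ esymm n j x ^ 2 * (((j ! : ℝ) * ((n-j)! : ℝ))^2) := hnew
      _ = (esymm n j x * ((j ! : ℝ) * ((n-j)! : ℝ))) ^ 2 := by ring
  obtain ⟨m', hm'⟩ : ∃ m', k - l = m' + 1 := ⟨k - l - 1, by omega⟩
  set d : ℝ := (k : ℝ) - (l : ℝ) with hd
  have hdm : d = ((m' + 1 : ℕ) : ℝ) := by
    rw [hd, ← Nat.cast_sub hlk.le, hm']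
  have hdpos : 0 < d := by
    rw [hdm]; positivity
  have hdne : d ≠ 0 := hdpos.ne'
  set u : ℝ := s k / s l with hu_def
  have hslpos : 0 < s l := hspos l (by omega)
  have hskpos : 0 < s k := hspos k le_rfl
  have hsk1pos : 0 < s (k-1) := hspos (k-1) (by omega)
  have hupos : 0 < u := by rw [hu_def]; positivity
  have hpos' : ∀ j, l ≤ j → j ≤ k → 0 < s j := fun j _ hj => hspos j hj
  -- inequality (I)
  have hI : u ^ (1 - 1/d) ≤ s (k-1) / s l := by
    have hbase := log_concave_interval s l k hpos'
      (fun j h1 h2 => hN j (by omega) h2) (k-1) (by omega) (by omega)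
    rw [show k - 1 - l = m' from by omega, show k - (k-1) = 1 from by omega,
      show k - l = m' + 1 from hm'] at hbase
    have step1 : (s k / s l) ^ m' ≤ (s (k-1) / s l) ^ (m' + 1) := by
      rw [div_pow, div_pow, div_le_div_iff₀ (by positivity) (by positivity)]
      calc s k ^ m' * s l ^ (m' + 1) = (s k ^ m' * s l ^ 1) * s l ^ m' := by ring
        _ ≤ s (k-1) ^ (m'+1) * s l ^ m' := by
            exact mul_le_mul_of_nonneg_right hbase (by positivity)
    have h2 := Real.rpow_le_rpow (by positivity) step1 (by positivity : (0:ℝ) ≤ 1/d)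
    rw [← Real.rpow_natCast (s k / s l) m', ← Real.rpow_natCast (s (k-1) / s l) (m'+1),
      ← Real.rpow_mul (by positivity), ← Real.rpow_mul (by positivity)] at h2
    rw [show ((m' + 1 : ℕ) : ℝ) * (1/d) = 1 from by rw [← hdm]; field_simp,
      Real.rpow_one] at h2
    rw [show ((m' : ℕ) : ℝ) * (1/d) = 1 - 1/d from by
      have : ((m' : ℕ) : ℝ) = d - 1 := by rw [hdm]; push_cast; ring
      rw [this]; field_simp] at h2
    exact h2
  -- inequality (II) (vacuous for l = 0)
  have hII : 1 ≤ l → s (l-1) / s l ≤ u ^ (-(1/d)) := by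
    intro hl1
    have hsl1pos : 0 < s (l-1) := hspos (l-1) (by omega)
    have hbase := log_concave_interval s (l-1) k
      (fun j _ hj => hspos j hj) (fun j h1 h2 => hN j (by omega) h2) l (by omega) (by omega)
    rw [show l - (l-1) = 1 from by omega, show k - l = m' + 1 from hm',
      show k - (l-1) = m' + 2 from by omega] at hbase
    have step2 : (s (l-1) / s l) ^ (m'+1) ≤ (s l / s k) ^ 1 := by
      rw [div_pow, div_pow, div_le_div_iff₀ (by positivity) (by positivity)]
      calc s (l-1) ^ (m'+1) * (s k) ^ 1 = s k ^ 1 * s (l-1) ^ (m'+1) := by ring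
        _ ≤ s l ^ (m' + 2) := hbase
        _ = s l ^ 1 * s l ^ (m'+1) := by ring
    have h2 := Real.rpow_le_rpow (by positivity) step2 (by positivity : (0:ℝ) ≤ 1/d)
    rw [← Real.rpow_natCast (s (l-1) / s l) (m'+1), ← Real.rpow_natCast (s l / s k) 1,
      ← Real.rpow_mul (by positivity), ← Real.rpow_mul (by positivity)] at h2
    rw [show ((m' + 1 : ℕ) : ℝ) * (1/d) = 1 from by rw [← hdm]; field_simp,
      Real.rpow_one] at h2
    rw [show ((1 : ℕ) : ℝ) * (1/d) = 1/d from by norm_num] at h2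
    have hinv : s l / s k = u⁻¹ := by rw [hu_def, inv_div]
    rw [hinv, Real.inv_rpow hupos.le, ← Real.rpow_neg hupos.le] at h2
    exact h2
  -- the core inequality
  have hcore : 1 ≤ (1/d) * u ^ (1/d - 1) *
      (((k:ℝ) * (s (k-1) * s l) - (l:ℝ) * (s (l-1) * s k)) / (s l)^2) := by
    have hbr1 : u ^ (1 - 1/d) * s l ^ 2 ≤ s (k-1) * s l := by
      have := mul_le_mul_of_nonneg_right hI (by positivity : (0:ℝ) ≤ s l ^ 2)
      calc u ^ (1 - 1/d) * s l ^ 2 ≤ s (k-1) / s l * s l ^ 2 := this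
        _ = s (k-1) * s l := by field_simp
    have hbr2 : (l:ℝ) * (s (l-1) * s k) ≤ (l:ℝ) * (u ^ (1 - 1/d) * s l ^ 2) := by
      rcases Nat.eq_zero_or_pos l with h0 | h1
      · subst h0; simp
      · apply mul_le_mul_of_nonneg_left _ (by positivity : (0:ℝ) ≤ (l:ℝ))
        have h2 := hII h1
        have h3 := mul_le_mul_of_nonneg_right h2 (by positivity : (0:ℝ) ≤ u * s l ^ 2)
        calc s (l-1) * s k = (s (l-1) / s l) * (u * s l ^ 2) := by
              rw [hu_def]; field_simp
          _ ≤ u ^ (-(1/d)) * (u * s l ^ 2) := h3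
          _ = (u ^ (-(1/d)) * u ^ (1:ℝ)) * s l ^ 2 := by rw [Real.rpow_one]; ring
          _ = u ^ (1 - 1/d) * s l ^ 2 := by
              rw [← Real.rpow_add hupos]; ring_nf
    have hbr : d * (u ^ (1 - 1/d) * s l ^ 2) ≤
        (k:ℝ) * (s (k-1) * s l) - (l:ℝ) * (s (l-1) * s k) := by
      have hk' : (k:ℝ) * (u ^ (1 - 1/d) * s l ^ 2) ≤ (k:ℝ) * (s (k-1) * s l) :=
        mul_le_mul_of_nonneg_left hbr1 (by positivity)
      have : d * (u ^ (1 - 1/d) * s l ^ 2)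
          = (k:ℝ) * (u ^ (1 - 1/d) * s l ^ 2) - (l:ℝ) * (u ^ (1 - 1/d) * s l ^ 2) := by
        rw [hd]; ring
      rw [this]
      linarith [hbr2, hk']
    have hfrac : d * u ^ (1 - 1/d) ≤
        ((k:ℝ) * (s (k-1) * s l) - (l:ℝ) * (s (l-1) * s k)) / (s l)^2 := by
      rw [le_div_iff₀ (by positivity)]
      calc d * u ^ (1 - 1/d) * s l ^ 2 = d * (u ^ (1 - 1/d) * s l ^ 2) := by ring
        _ ≤ _ := hbr
    have huu : u ^ ((1:ℝ)/d - 1) * u ^ (1 - 1/d) = 1 := by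
      rw [← Real.rpow_add hupos, show (1:ℝ)/d - 1 + (1 - 1/d) = 0 from by ring,
        Real.rpow_zero]
    calc (1:ℝ) = (1/d) * u ^ (1/d - 1) * (d * u ^ (1 - 1/d)) := by
          have h1 : 1/d * u ^ ((1:ℝ)/d - 1) * (d * u ^ (1 - 1/d))
              = (u ^ ((1:ℝ)/d - 1) * u ^ (1 - 1/d)) * (d / d) := by ring
          rw [h1, huu, div_self hdne, mul_one]
      _ ≤ (1/d) * u ^ (1/d - 1) *
          (((k:ℝ) * (s (k-1) * s l) - (l:ℝ) * (s (l-1) * s k)) / (s l)^2) := by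
          apply mul_le_mul_of_nonneg_left hfrac (by positivity)
  -- abbreviations for the factorial products
  set Fk : ℝ := (k ! : ℝ) * ((n-k)! : ℝ) with hFk_def
  set Fl : ℝ := (l ! : ℝ) * ((n-l)! : ℝ) with hFl_def
  have hFkpos : 0 < Fk := by rw [hFk_def]; positivity
  have hFlpos : 0 < Fl := by rw [hFl_def]; positivity
  have hσlpos : 0 < esymm n l x := hσpos l (by omega)
  -- closed forms for the sums
  have hfk : ((n - (k-1) : ℕ) : ℝ) * Fk
      = (k : ℝ) * (((k-1)! : ℝ) * ((n - (k-1))! : ℝ)) := by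
    have e1 : n - (k-1) = (n-k) + 1 := by omega
    have e2 : k ! = k * (k-1)! := by
      conv_lhs => rw [show k = (k-1) + 1 from by omega]
      rw [Nat.factorial_succ, show (k-1)+1 = k from by omega]
    rw [hFk_def, e1, e2, Nat.factorial_succ]
    push_cast
    ring
  have hsum1' : ∑ i : Fin n, esymmDel n (k-1) x i = (k:ℝ) * s (k-1) / Fk := by
    rw [sum_esymmDel]
    have hsk1 : s (k-1) = esymm n (k-1) x * (((k-1)! : ℝ) * ((n - (k-1))! : ℝ)) := rfl
    rw [hsk1, eq_div_iff hFkpos.ne']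
    linear_combination (esymm n (k-1) x) * hfk
  have hsum2' : ∑ i : Fin n, esymmDelZ n ((l:ℤ) - 1) x i = (l:ℝ) * s (l-1) / Fl := by
    rcases Nat.eq_zero_or_pos l with h0 | h1
    · subst h0
      simp [esymmDelZ]
    · have hlz : ¬ ((l:ℤ) - 1 < 0) := by omega
      have htn : ((l:ℤ) - 1).toNat = l - 1 := by omega
      simp only [esymmDelZ, if_neg hlz, htn]
      rw [sum_esymmDel]
      have hfl : ((n - (l-1) : ℕ) : ℝ) * Fl
          = (l : ℝ) * (((l-1)! : ℝ) * ((n - (l-1))! : ℝ)) := by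
        have e1 : n - (l-1) = (n-l) + 1 := by omega
        have e2 : l ! = l * (l-1)! := by
          conv_lhs => rw [show l = (l-1) + 1 from by omega]
          rw [Nat.factorial_succ, show (l-1)+1 = l from by omega]
        rw [hFl_def, e1, e2, Nat.factorial_succ]
        push_cast
        ring
      have hsl1 : s (l-1) = esymm n (l-1) x * (((l-1)! : ℝ) * ((n - (l-1))! : ℝ)) := rfl
      rw [hsl1, eq_div_iff hFlpos.ne']
      linear_combination (esymm n (l-1) x) * hfl
  -- the choose ratio
  have hch : ((n.choose k : ℝ) / (n.choose l : ℝ)) = Fl / Fk := by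
    rw [Nat.cast_choose ℝ hkn, Nat.cast_choose ℝ (show l ≤ n by omega), hFk_def, hFl_def]
    have h1 : (n ! : ℝ) ≠ 0 := by positivity
    have h2 : (k ! : ℝ) ≠ 0 := by positivity
    have h3 : (l ! : ℝ) ≠ 0 := by positivity
    have h4 : ((n-k)! : ℝ) ≠ 0 := by positivity
    have h5 : ((n-l)! : ℝ) ≠ 0 := by positivity
    field_simp
  have hFlk : (0:ℝ) < Fl / Fk := by positivity
  have ha : esymm n k x / esymm n l x = u * (Fl / Fk) := by
    have h1 : s k = esymm n k x * Fk := rfl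
    have h2 : s l = esymm n l x * Fl := rfl
    rw [hu_def, h1, h2]
    field_simp
  -- rewrite the sum in the goal
  have hgoal_sum : (∑ i : Fin n, (1 / d) * (esymm n k x / esymm n l x) ^ ((1:ℝ)/d - 1) *
        ((esymmDel n (k-1) x i * esymm n l x - esymm n k x * esymmDelZ n ((l:ℤ)-1) x i)
          / (esymm n l x)^2))
      = (1/d) * (esymm n k x / esymm n l x) ^ ((1:ℝ)/d - 1) *
        (((∑ i : Fin n, esymmDel n (k-1) x i) * esymm n l x
          - esymm n k x * (∑ i : Fin n, esymmDelZ n ((l:ℤ)-1) x i)) / (esymm n l x)^2) := by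
    rw [← Finset.mul_sum, ← Finset.sum_div, Finset.sum_sub_distrib, ← Finset.sum_mul,
      ← Finset.mul_sum]
  have hEQ : (1/d) * (esymm n k x / esymm n l x) ^ ((1:ℝ)/d - 1) *
        (((k:ℝ) * s (k-1) / Fk * esymm n l x - esymm n k x * ((l:ℝ) * s (l-1) / Fl))
          / (esymm n l x)^2)
      = (Fl/Fk) ^ ((1:ℝ)/d) * ((1/d) * u ^ ((1:ℝ)/d - 1) *
          (((k:ℝ) * (s (k-1) * s l) - (l:ℝ) * (s (l-1) * s k)) / (s l)^2)) := by
    rw [ha, Real.mul_rpow hupos.le hFlk.le, Real.rpow_sub hFlk, Real.rpow_one]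
    have h2 : s l = esymm n l x * Fl := rfl
    have h3 : s k = esymm n k x * Fk := rfl
    rw [h2, h3]
    field_simp
  rw [hgoal_sum, hsum1', hsum2', hch, hEQ]
  calc (Fl/Fk) ^ ((1:ℝ)/d) = (Fl/Fk) ^ ((1:ℝ)/d) * 1 := (mul_one _).symm
    _ ≤ (Fl/Fk) ^ ((1:ℝ)/d) * ((1/d) * u ^ ((1:ℝ)/d - 1) *
          (((k:ℝ) * (s (k-1) * s l) - (l:ℝ) * (s (l-1) * s k)) / (s l)^2)) := by
        exact mul_le_mul_of_nonneg_left hcore (by positivity)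

end AuxNewton
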